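/- Let n ≥ 2 and let W be the 2ⁿ×n real matrix whose rows enumerate all vectors in {0,1}ⁿ (the workload AllPredicate(n)). Then: (i) WᵀW = 2ⁿ⁻²·(I + J), i.e., every diagonal entry of WᵀW equals 2ⁿ⁻¹ and every off-diagonal entry equals 2ⁿ⁻²; and (ii) if moreover n = 2ᵏ for a positive integer k, then the infimum over all full column rank strategy matrices A (with n columns) of ‖A‖₂² · trace(WᵀW (AᵀA)⁻¹) equals (2ⁿ⁻²/n)·(n − 1 + √(n+1))², and this infimum is attained by some strategy A. -/

import Mathlib

open Matrix BigOperators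

/-- The workload `AllPredicate(n)`: its rows enumerate all vectors in `{0,1}ⁿ`
(indexed by `Fin n → Bool`, a type of cardinality `2ⁿ`). -/
def allPredicate (n : ℕ) : Matrix (Fin n → Bool) (Fin n) ℝ :=
  Matrix.of fun s j => if s j then 1 else 0

/-- The maximum Euclidean (L2) column norm of a matrix (its L2 sensitivity). -/
noncomputable def l2Sens {p n : ℕ} (A : Matrix (Fin p) (Fin n) ℝ) : ℝ :=
  ⨆ j, Real.sqrt (∑ i, (A i j) ^ 2)

namespace APaux

lemma card_ne {α : Type*} [Fintype α] [DecidableEq α] (j : α) :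
    Fintype.card {i : α // i ≠ j} = Fintype.card α - 1 := by
  have := Fintype.card_subtype_compl (fun i : α => i = j)
  simpa [Fintype.card_subtype_eq] using this

lemma sum_ind {α : Type*} [Fintype α] [DecidableEq α] (x : α) :
    ∑ s : α → Bool, (if s x then (1:ℝ) else 0) = 2 ^ (Fintype.card α - 1) := by
  rw [Fintype.sum_equiv (Equiv.funSplitAt x Bool)
    (fun s => if s x then (1:ℝ) else 0) (fun p => if p.1 then (1:ℝ) else 0) (fun s => rfl)]
  rw [Fintype.sum_prod_type]
  simp [Finset.sum_const, Fintype.card_fun, card_ne]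

lemma sum_ind2 {α : Type*} [Fintype α] [DecidableEq α] {x y : α} (hxy : x ≠ y) :
    ∑ s : α → Bool, (if s x then (1:ℝ) else 0) * (if s y then 1 else 0)
      = 2 ^ (Fintype.card α - 2) := by
  rw [Fintype.sum_equiv (Equiv.funSplitAt x Bool)
    (fun s => (if s x then (1:ℝ) else 0) * (if s y then 1 else 0))
    (fun p => (if p.1 then (1:ℝ) else 0) * (if p.2 ⟨y, hxy.symm⟩ then 1 else 0))
    (fun s => rfl)]
  rw [Fintype.sum_prod_type]
  have h := sum_ind (α := {i : α // i ≠ x}) ⟨y, hxy.symm⟩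
  simp only [Bool.forall_bool, if_true, if_false] at *
  simp [h, card_ne]
  omega

/-- all-ones matrix -/
def Jmat (n : ℕ) : Matrix (Fin n) (Fin n) ℝ := Matrix.of fun _ _ => 1

variable {n : ℕ}

lemma Jmat_transpose : (Jmat n)ᵀ = Jmat n := rfl

lemma aIbJ_transpose (a b : ℝ) :
    (a • (1 : Matrix (Fin n) (Fin n) ℝ) + b • Jmat n)ᵀ
      = a • (1 : Matrix (Fin n) (Fin n) ℝ) + b • Jmat n := by
  rw [Matrix.transpose_add, Matrix.transpose_smul, Matrix.transpose_smul, Matrix.transpose_one,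
    Jmat_transpose]

lemma aIbJ_mul (a b c d : ℝ) :
    (a • (1 : Matrix (Fin n) (Fin n) ℝ) + b • Jmat n) * (c • 1 + d • Jmat n)
      = (a*c) • (1 : Matrix (Fin n) (Fin n) ℝ) + (a*d + b*c + n*b*d) • Jmat n := by
  have hJJ : Jmat n * Jmat n = (n:ℝ) • Jmat n := by
    ext i j; simp [Jmat, Matrix.mul_apply]
  simp only [add_mul, mul_add, Matrix.smul_mul, Matrix.mul_smul, Matrix.one_mul,
    Matrix.mul_one, hJJ, smul_smul]
  match_scalars <;> ring

lemma aIbJ_apply (a b : ℝ) (i j : Fin n) :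
    (a • (1 : Matrix (Fin n) (Fin n) ℝ) + b • Jmat n) i j
      = (if i = j then a else 0) + b := by
  simp [Jmat, Matrix.one_apply, mul_ite]

lemma aIbJ_trace (a b : ℝ) :
    Matrix.trace (a • (1 : Matrix (Fin n) (Fin n) ℝ) + b • Jmat n) = n * (a + b) := by
  simp [Matrix.trace, Matrix.diag, aIbJ_apply, Jmat, Finset.sum_add_distrib, mul_add]

lemma aIbJ_isUnit (a b : ℝ) (ha : a ≠ 0) (hab : a + n * b ≠ 0) :
    IsUnit (a • (1 : Matrix (Fin n) (Fin n) ℝ) + b • Jmat n) := by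
  have h1 : (a • (1 : Matrix (Fin n) (Fin n) ℝ) + b • Jmat n) *
      ((1/a) • 1 + (-(b/(a*(a+n*b)))) • Jmat n) = 1 := by
    rw [aIbJ_mul]
    have h1 : a * (1/a) = 1 := by field_simp
    have h2 : a * -(b / (a * (a + ↑n * b))) + b * (1 / a) + ↑n * b * -(b / (a * (a + ↑n * b))) = 0 := by
      have e : b / (a * (a + ↑n * b)) * (a + ↑n * b) = b / a := by rw [← div_div, div_mul_cancel₀ _ hab]
      linear_combination -e
    rw [h1, h2]; simp
  have h2 : ((1/a) • (1 : Matrix (Fin n) (Fin n) ℝ) + (-(b/(a*(a+n*b)))) • Jmat n) *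
      (a • 1 + b • Jmat n) = 1 := by
    rw [aIbJ_mul]
    have h1 : (1/a) * a = 1 := by field_simp
    have h2 : 1/a * b + -(b / (a * (a + ↑n * b))) * a + ↑n * -(b / (a * (a + ↑n * b))) * b = 0 := by
      have e : b / (a * (a + ↑n * b)) * (a + ↑n * b) = b / a := by rw [← div_div, div_mul_cancel₀ _ hab]
      linear_combination -e
    rw [h1, h2]; simp
  exact ⟨⟨_, _, h1, h2⟩, rfl⟩

lemma gram_allPredicate (n : ℕ) (hn : 2 ≤ n) :
    (allPredicate n)ᵀ * allPredicate n
        = ((2 : ℝ) ^ (n - 2)) •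
            ((1 : Matrix (Fin n) (Fin n) ℝ) + Matrix.of fun _ _ => (1 : ℝ)) := by
  ext j j'
  simp only [Matrix.mul_apply, Matrix.transpose_apply, allPredicate, Matrix.of_apply,
    Matrix.smul_apply, Matrix.add_apply, Matrix.one_apply, smul_eq_mul]
  rcases eq_or_ne j j' with rfl | hjj
  · have : ∀ s : Fin n → Bool, (if s j then (1:ℝ) else 0) * (if s j then 1 else 0)
        = (if s j then (1:ℝ) else 0) := by intro s; by_cases h : s j <;> simp [h]
    rw [Finset.sum_congr rfl (fun s _ => this s), sum_ind j]
    rw [if_pos rfl]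
    simp only [Fintype.card_fun, Fintype.card_bool, Fintype.card_fin]
    rw [show (2:ℝ)^(n-1) = 2^((n-2)+1) by congr 1; omega]
    ring
  · rw [sum_ind2 hjj, if_neg hjj]
    simp [Fintype.card_fun]

/-- trace of `Mᵀ * N` as a sum of entrywise products -/
lemma trace_transpose_mul {p n : ℕ} (M N : Matrix (Fin p) (Fin n) ℝ) :
    Matrix.trace (Mᵀ * N) = ∑ z : Fin p × Fin n, M z.1 z.2 * N z.1 z.2 := by
  rw [Fintype.sum_prod_type]
  rw [Matrix.trace]
  simp only [Matrix.diag, Matrix.mul_apply, Matrix.transpose_apply]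
  exact Finset.sum_comm

/-- Cauchy–Schwarz for the Frobenius inner product -/
lemma trace_CS {p n : ℕ} (M N : Matrix (Fin p) (Fin n) ℝ) :
    (Matrix.trace (Mᵀ * N))^2 ≤ Matrix.trace (Mᵀ * M) * Matrix.trace (Nᵀ * N) := by
  rw [trace_transpose_mul, trace_transpose_mul, trace_transpose_mul]
  have := Finset.sum_mul_sq_le_sq_mul_sq Finset.univ
    (fun z : Fin p × Fin n => M z.1 z.2) (fun z : Fin p × Fin n => N z.1 z.2)
  simpa [pow_two] using this

lemma trace_transpose_mul_self_nonneg {p n : ℕ} (N : Matrix (Fin p) (Fin n) ℝ) :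
    0 ≤ Matrix.trace (Nᵀ * N) := by
  rw [trace_transpose_mul]
  exact Finset.sum_nonneg fun z _ => mul_self_nonneg _

end APaux
open APaux in
theorem allPredicate_gram_and_optimal_error (n : ℕ) (hn : 2 ≤ n) :
    (allPredicate n)ᵀ * allPredicate n
        = ((2 : ℝ) ^ (n - 2)) •
            ((1 : Matrix (Fin n) (Fin n) ℝ) + Matrix.of fun _ _ => (1 : ℝ)) ∧
    (∀ k : ℕ, 0 < k → n = 2 ^ k →
      IsLeast {r : ℝ | ∃ (p : ℕ) (A : Matrix (Fin p) (Fin n) ℝ), A.rank = n ∧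
          r = (l2Sens A) ^ 2 *
              Matrix.trace ((allPredicate n)ᵀ * allPredicate n * (Aᵀ * A)⁻¹)}
        (((2 : ℝ) ^ (n - 2) / (n : ℝ)) *
          ((n : ℝ) - 1 + Real.sqrt ((n : ℝ) + 1)) ^ 2)) := by
  have hgram := gram_allPredicate n hn
  refine ⟨hgram, ?_⟩
  intro k hk hnk
  haveI : Nonempty (Fin n) := ⟨⟨0, by omega⟩⟩
  have hn0 : (0:ℝ) < (n:ℝ) := by exact_mod_cast (by omega : 0 < n)
  set nR : ℝ := (n:ℝ) with hnR
  set g : ℝ := (2:ℝ)^(n-2) with hgdef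
  have hg0 : 0 < g := by positivity
  set q : ℝ := Real.sqrt (nR+1) with hqdef
  have hq2 : q*q = nR + 1 := Real.mul_self_sqrt (by positivity)
  have hq0 : 0 ≤ q := Real.sqrt_nonneg _
  have hq1 : 1 ≤ q := by nlinarith
  set c : ℝ := Real.sqrt g with hcdef
  have hc0 : 0 < c := Real.sqrt_pos.mpr hg0
  have hc2 : c*c = g := Real.mul_self_sqrt hg0.le
  set β : ℝ := c*(q-1)/nR with hbeta
  have hb' : nR*β = c*q - c := by rw [hbeta]; field_simp
  have hβ0 : 0 ≤ β := by
    apply div_nonneg _ hn0.le; nlinarith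
  -- the square root of the Gram matrix
  set S : Matrix (Fin n) (Fin n) ℝ := c • 1 + β • Jmat n with hSdef
  have hSt : Sᵀ = S := aIbJ_transpose c β
  have hSu : IsUnit S := by
    refine aIbJ_isUnit c β hc0.ne' ?_
    have : c + nR*β = c*q := by linarith
    rw [this]; positivity
  have hSS : S * S = g • (1 : Matrix (Fin n) (Fin n) ℝ) + g • Jmat n := by
    rw [hSdef, aIbJ_mul, hc2]
    have key : c*β + β*c + nR*β*β = g := by
      have h2 : nR * (c*β + β*c + nR*β*β) = nR * g := by
        linear_combination (2*c + nR*β + c*q - c) * hb' + (q*q-1)*hc2 + g*hq2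
      exact mul_left_cancel₀ hn0.ne' h2
    rw [key]
  have hGSS : (allPredicate n)ᵀ * allPredicate n = S * S := by
    rw [hgram, hSS, smul_add]; rfl
  have htrS : Matrix.trace S = c*(nR-1+q) := by
    rw [hSdef, aIbJ_trace]; linear_combination hb'
  constructor
  · -- membership : the optimal strategy
    set a : ℝ := Real.sqrt c with hadef
    set rr : ℝ := Real.sqrt (c*q) with hrdef
    set b : ℝ := (rr - a)/nR with hbdef
    have ha0 : 0 < a := Real.sqrt_pos.mpr hc0
    have hr0 : 0 < rr := Real.sqrt_pos.mpr (by positivity)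
    have ha2 : a*a = c := Real.mul_self_sqrt hc0.le
    have hr2 : rr*rr = c*q := Real.mul_self_sqrt (by positivity)
    have hb2 : nR*b = rr - a := by rw [hbdef]; field_simp
    have hab : a + nR*b = rr := by linarith
    set A : Matrix (Fin n) (Fin n) ℝ := a • 1 + b • Jmat n with hAdef
    have hAu : IsUnit A := by
      refine aIbJ_isUnit a b ha0.ne' ?_
      rw [hab]; exact hr0.ne'
    have hP : Aᵀ * A = S := by
      rw [hAdef, aIbJ_transpose, aIbJ_mul, ha2]
      have key2 : a*b + b*a + nR*b*b = β := by
        have h2 : nR * (a*b + b*a + nR*b*b) = nR * β := by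
          linear_combination (2*a + nR*b + rr - a) * hb2 + hr2 - ha2 - hb'
        exact mul_left_cancel₀ hn0.ne' h2
      rw [key2, hSdef]
    refine ⟨n, A, ?_, ?_⟩
    · rw [Matrix.rank_of_isUnit A hAu, Fintype.card_fin]
    · -- value of the error at the optimum
      have htr : Matrix.trace ((allPredicate n)ᵀ * allPredicate n * (Aᵀ * A)⁻¹)
          = c*(nR-1+q) := by
        rw [hP, hGSS, Matrix.mul_assoc,
          Matrix.mul_nonsing_inv _ ((Matrix.isUnit_iff_isUnit_det S).mp hSu),
          Matrix.mul_one, htrS]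
      have hcol : ∀ j : Fin n, ∑ i, (A i j)^2 = c + β := by
        intro j
        have h1 : (Aᵀ * A) j j = c + β := by rw [hP, hSdef, aIbJ_apply]; simp
        rw [← h1, Matrix.mul_apply]
        exact Finset.sum_congr rfl fun i _ => by rw [Matrix.transpose_apply, pow_two]
      have hl2 : (l2Sens A)^2 = c + β := by
        have h1 : l2Sens A = Real.sqrt (c + β) := by
          unfold l2Sens
          simp only [hcol]
          exact ciSup_const
        rw [h1, Real.sq_sqrt (by linarith)]
      rw [htr, hl2]
      have hw : nR*(c+β) = c*(nR-1+q) := by linear_combination hb'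
      have h2 : nR * ((c+β) * (c*(nR-1+q))) = nR * (g/nR * (nR-1+q)^2) := by
        have h3 : nR * (g/nR * (nR-1+q)^2) = g * (nR-1+q)^2 := by field_simp
        rw [h3]
        linear_combination (c*(nR-1+q)) * hw + (nR-1+q)^2 * hc2
      exact (mul_left_cancel₀ hn0.ne' h2).symm
  · -- lower bound
    rintro r ⟨p, A, hrank, hrval⟩
    set P : Matrix (Fin n) (Fin n) ℝ := Aᵀ * A with hPdef
    have hPr : P.rank = n := by rw [hPdef, Matrix.rank_transpose_mul_self, hrank]
    have hPu : IsUnit P := by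
      have hsurj : Function.Surjective P.mulVecLin := by
        rw [← LinearMap.range_eq_top]
        apply Submodule.eq_top_of_finrank_eq
        rw [Module.finrank_fintype_fun_eq_card, Fintype.card_fin]
        exact hPr
      have hinj : Function.Injective P.mulVecLin :=
        (LinearMap.injective_iff_surjective).mpr hsurj
      exact Matrix.mulVec_injective_iff_isUnit.mp
        (fun x y h => hinj (by simpa [Matrix.mulVecLin_apply] using h))
    have hPdet : IsUnit P.det := (Matrix.isUnit_iff_isUnit_det P).mp hPu
    have hPP1 : P * P⁻¹ = 1 := Matrix.mul_nonsing_inv _ hPdet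
    have hPt : Pᵀ = P := by rw [hPdef, Matrix.transpose_mul, Matrix.transpose_transpose]
    have hPit : P⁻¹ᵀ = P⁻¹ := by rw [Matrix.transpose_nonsing_inv, hPt]
    set Y : Matrix (Fin p) (Fin n) ℝ := A * (P⁻¹ * S) with hYdef
    have hXY : Aᵀ * Y = S := by
      rw [hYdef, ← Matrix.mul_assoc, ← hPdef, ← Matrix.mul_assoc, hPP1, Matrix.one_mul]
    have hYt : Yᵀ = (S * P⁻¹) * Aᵀ := by
      rw [hYdef, Matrix.transpose_mul, Matrix.transpose_mul, hPit, hSt]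
    have hYY : Yᵀ * Y = (S * P⁻¹) * S := by
      rw [hYt, Matrix.mul_assoc, hXY]
    set t : ℝ := Matrix.trace ((allPredicate n)ᵀ * allPredicate n * (Aᵀ * A)⁻¹) with htdef
    have ht_eq : Matrix.trace (Yᵀ * Y) = t := by
      rw [hYY, Matrix.trace_mul_comm, ← Matrix.mul_assoc, htdef, hGSS, hPdef]
    have ht0 : 0 ≤ t := ht_eq ▸ trace_transpose_mul_self_nonneg Y
    have hCS : (Matrix.trace S)^2 ≤ Matrix.trace P * t := by
      have h := trace_CS A Y
      rwa [hXY, ← hPdef, ht_eq] at h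
    -- column norm bound
    have hl2b : ∀ j : Fin n, P j j ≤ (l2Sens A)^2 := by
      intro j
      have hcolP : ∑ i, (A i j)^2 = P j j := by
        rw [hPdef, Matrix.mul_apply]
        exact Finset.sum_congr rfl fun i _ => by rw [Matrix.transpose_apply, pow_two]
      have h0 : 0 ≤ ∑ i, (A i j)^2 := Finset.sum_nonneg fun i _ => sq_nonneg _
      have hle : Real.sqrt (∑ i, (A i j)^2) ≤ l2Sens A := by
        unfold l2Sens
        exact le_ciSup (f := fun j : Fin n => Real.sqrt (∑ i, (A i j)^2))
          (Set.Finite.bddAbove (Set.finite_range _)) j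
      calc P j j = (Real.sqrt (∑ i, (A i j)^2))^2 := by rw [Real.sq_sqrt h0, hcolP]
        _ ≤ (l2Sens A)^2 := pow_le_pow_left₀ (Real.sqrt_nonneg _) hle 2
    have htrP : Matrix.trace P ≤ nR * (l2Sens A)^2 := by
      rw [Matrix.trace]
      calc ∑ j, P.diag j ≤ ∑ _j : Fin n, (l2Sens A)^2 :=
            Finset.sum_le_sum fun j _ => hl2b j
        _ = nR * (l2Sens A)^2 := by
            rw [Finset.sum_const, Finset.card_univ, Fintype.card_fin, nsmul_eq_mul]
    -- combine
    have hgoal : nR * (g/nR * (nR-1+q)^2) ≤ nR * r := by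
      have e1 : nR * (g/nR * (nR-1+q)^2) = g * (nR-1+q)^2 := by field_simp
      have e2 : (Matrix.trace S)^2 = g * (nR-1+q)^2 := by
        rw [htrS]; linear_combination ((nR-1+q)^2) * hc2
      have e3 : Matrix.trace P * t ≤ (nR * (l2Sens A)^2) * t :=
        mul_le_mul_of_nonneg_right htrP ht0
      have e4 : nR * r = (nR * (l2Sens A)^2) * t := by rw [hrval]; ring
      rw [e1, ← e2, e4]
      exact le_trans hCS e3
    exact le_of_mul_le_mul_left hgoal hn0
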